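/- Let d ≥ 1, L > 0, and ε > 0 with ε/L < 1/2. The map f: [0,1]^d → ℝ^d given by f(x) = L·x is L-Lipschitz in the ℓ∞ norm, and every function g: [0,1]^d → ℝ^d whose image is a finite set of cardinality strictly less than (L/(2ε))^d satisfies sup_{x ∈ [0,1]^d} ‖g(x) − f(x)‖_∞ > ε. -/
import Mathlib


/-- **Lipschitz-scaled lower-bound core of the paper's Theorem 2 (Spike-Count Lower Bound).**
The map `f(x) = L·x` on `[0,1]^d` is `L`-Lipschitz in the `ℓ∞` norm (here `Fin d → ℝ`
carries the sup norm), and any `g` whose image on the cube is a finite set of cardinality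
strictly less than `(L/(2ε))^d` fails to `ε`-approximate `f` in the sup sense. -/
theorem lipschitz_target_finite_image_lower_bound
    (d : ℕ) (hd : 1 ≤ d) (L ε : ℝ) (hL : 0 < L) (hε : 0 < ε)
    (hres : ε / L < 1 / 2) :
    LipschitzOnWith (Real.toNNReal L) (fun x : Fin d → ℝ => L • x)
      {x | ∀ i, x i ∈ Set.Icc (0 : ℝ) 1} ∧
    ∀ g : (Fin d → ℝ) → (Fin d → ℝ),
      ∀ hfin : (g '' {x | ∀ i, x i ∈ Set.Icc (0 : ℝ) 1}).Finite,
        (hfin.toFinset.card : ℝ) < (L / (2 * ε)) ^ d →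
        ∃ x : Fin d → ℝ, (∀ i, x i ∈ Set.Icc (0 : ℝ) 1) ∧ ε < ‖g x - L • x‖ := by
  have cube := {x : Fin d → ℝ | ∀ i, x i ∈ Set.Icc (0 : ℝ) 1}
  constructor
  · apply LipschitzWith.lipschitzOnWith
    rw [lipschitzWith_iff_dist_le_mul]
    intro x y
    rw [dist_smul₀, Real.norm_of_nonneg hL.le, Real.coe_toNNReal L hL.le]
  · intro g hfin hcard
    by_contra hcon
    push_neg at hcon
    -- setup
    set r : ℝ := L / (2 * ε) with hr
    have h2ε : 0 < 2 * ε := by linarith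
    have hr1 : 1 < r := by
      rw [hr, lt_div_iff₀ h2ε]
      have := (div_lt_iff₀ hL).mp hres
      linarith
    set M : ℕ := ⌈r⌉₊ with hM
    have hM2 : 2 ≤ M := by
      have : (1 : ℝ) < ⌈r⌉₊ := lt_of_lt_of_le hr1 (Nat.le_ceil r)
      exact_mod_cast this
    have hMr : r ≤ M := Nat.le_ceil r
    have hM1r : ((M : ℝ) - 1) < r := by
      have := Nat.ceil_lt_add_one (le_of_lt (lt_trans one_pos hr1))
      linarith
    have hM1pos : (0 : ℝ) < (M : ℝ) - 1 := by
      have : (2 : ℝ) ≤ M := by exact_mod_cast hM2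
      linarith
    -- grid map
    set φ : (Fin d → Fin M) → (Fin d → ℝ) := fun k i => (k i : ℝ) / ((M : ℝ) - 1) with hφ
    have hφcube : ∀ k, ∀ i, φ k i ∈ Set.Icc (0 : ℝ) 1 := by
      intro k i
      constructor
      · positivity
      · rw [div_le_one hM1pos]
        have : (k i : ℕ) ≤ M - 1 := Nat.le_pred_of_lt (k i).isLt
        have h1 : ((k i : ℕ) : ℝ) ≤ ((M - 1 : ℕ) : ℝ) := by exact_mod_cast this
        have h2 : ((M - 1 : ℕ) : ℝ) = (M : ℝ) - 1 := by
          have : 1 ≤ M := by omega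
          push_cast [this]
          ring
        linarith [h1, h2.le]
    -- injectivity of g ∘ φ
    have hinj : Function.Injective (fun k : Fin d → Fin M => g (φ k)) := by
      intro k k' heq
      by_contra hne
      obtain ⟨i, hi⟩ := Function.ne_iff.mp hne
      have hsep : 1 / ((M : ℝ) - 1) ≤ |φ k i - φ k' i| := by
        rw [hφ]
        simp only
        rw [div_sub_div_same, abs_div, abs_of_pos hM1pos, div_le_div_iff₀ hM1pos hM1pos]
        have : ((k i : ℤ)) ≠ ((k' i : ℤ)) := by
          intro h; apply hi; exact Fin.ext (by exact_mod_cast h)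
        have h1 : (1 : ℤ) ≤ |(k i : ℤ) - (k' i : ℤ)| := Int.one_le_abs (sub_ne_zero.mpr this)
        have h1' : (1 : ℝ) ≤ |((k i : ℝ)) - ((k' i : ℝ))| := by exact_mod_cast h1
        nlinarith [abs_nonneg (((k i : ℝ)) - ((k' i : ℝ)))]
      have hgap : 2 * ε < L * |φ k i - φ k' i| := by
        have h1 : 2 * ε / L < 1 / ((M : ℝ) - 1) := by
          rw [div_lt_div_iff₀ hL hM1pos]
          have : ((M : ℝ) - 1) < L / (2 * ε) := hM1r
          rw [lt_div_iff₀ h2ε] at this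
          linarith
        have := lt_of_lt_of_le h1 hsep
        rw [div_lt_iff₀ hL] at this
        linarith
      -- but approximation gives L * |φ k i - φ k' i| ≤ 2ε
      have h1 := hcon (φ k) (hφcube k)
      have h2 := hcon (φ k') (hφcube k')
      have hnormi : L * |φ k i - φ k' i| ≤ ‖L • φ k - L • φ k'‖ := by
        have : (L • φ k - L • φ k') i = L * (φ k i - φ k' i) := by
          simp [mul_sub]
        calc L * |φ k i - φ k' i| = |(L • φ k - L • φ k') i| := by
              rw [this, abs_mul, abs_of_pos hL]
          _ = ‖(L • φ k - L • φ k') i‖ := (Real.norm_eq_abs _).symm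
          _ ≤ ‖L • φ k - L • φ k'‖ := norm_le_pi_norm _ i
      have htri : ‖L • φ k - L • φ k'‖ ≤ 2 * ε := by
        have : L • φ k - L • φ k' = -(g (φ k) - L • φ k) + (g (φ k') - L • φ k') := by
          simp only at heq
          rw [heq]; abel
        rw [this]
        calc ‖-(g (φ k) - L • φ k) + (g (φ k') - L • φ k')‖
            ≤ ‖-(g (φ k) - L • φ k)‖ + ‖g (φ k') - L • φ k'‖ := norm_add_le _ _
          _ = ‖g (φ k) - L • φ k‖ + ‖g (φ k') - L • φ k'‖ := by rw [norm_neg]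
          _ ≤ ε + ε := add_le_add h1 h2
          _ = 2 * ε := by ring
      linarith
    -- count
    have hmaps : ∀ k : Fin d → Fin M, g (φ k) ∈ hfin.toFinset := by
      intro k
      rw [Set.Finite.mem_toFinset]
      exact ⟨φ k, hφcube k, rfl⟩
    have hle : (Finset.univ : Finset (Fin d → Fin M)).card ≤ hfin.toFinset.card :=
      Finset.card_le_card_of_injOn (fun k => g (φ k)) (fun k _ => hmaps k)
        (Function.Injective.injOn hinj)
    have hcardM : (Finset.univ : Finset (Fin d → Fin M)).card = M ^ d := by
      simp [Finset.card_univ]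
    have hpow : r ^ d ≤ ((M : ℝ)) ^ d :=
      pow_le_pow_left₀ (le_of_lt (lt_trans one_pos hr1)) hMr d
    have : ((M : ℝ)) ^ d ≤ (hfin.toFinset.card : ℝ) := by
      rw [hcardM] at hle
      exact_mod_cast hle
    linarith
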